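/- For real x₁, x₂ and t, s with |t| small enough that all factors are nonzero: (1/2)·[(1−ztx₁)^{−1−κ}(1−ztx₂)^{−κ}(1−z⁻¹tx₂)^{−1−κ}(1−z⁻¹tx₁)^{−κ} + (1−ztx₂)^{−1−κ}(1−ztx₁)^{−κ}(1−z⁻¹tx₁)^{−1−κ}(1−z⁻¹tx₂)^{−κ}] = (1 − (x₁+x₂)st + x₁x₂t²) / ((1−2stx₁+x₁²t²)(1−2stx₂+x₂²t²))^{κ+1}, where s = (z+z⁻¹)/2 and z is a nonzero complex number of modulus one (so s = cos θ). -/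

import Mathlib

open Complex

lemma cpow_mul_conj {A : ℂ} (h0 : A ≠ 0) (hπ : A.arg ≠ Real.pi) (w : ℂ) :
    A ^ w * (starRingEnd ℂ A) ^ w = ((Complex.normSq A : ℝ) : ℂ) ^ w := by
  have hc0 : (starRingEnd ℂ A) ≠ 0 := by simpa using h0
  have hn0 : ((Complex.normSq A : ℝ) : ℂ) ≠ 0 := by
    simp [Complex.normSq_eq_zero, h0]
  rw [Complex.cpow_def_of_ne_zero h0, Complex.cpow_def_of_ne_zero hc0,
    Complex.cpow_def_of_ne_zero hn0, ← Complex.exp_add, Complex.log_conj _ hπ]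
  congr 1
  have h1 : Complex.log A + starRingEnd ℂ (Complex.log A)
      = 2 * (Real.log ‖A‖ : ℂ) := by
    rw [Complex.add_conj, Complex.log_re]; push_cast; ring
  have h2 : Complex.log ((Complex.normSq A : ℝ) : ℂ) = ((2 * Real.log ‖A‖ : ℝ) : ℂ) := by
    rw [← Complex.ofReal_log (Complex.normSq_nonneg A), Complex.normSq_eq_norm_sq,
      Real.log_pow]
    push_cast; ring
  calc Complex.log A * w + starRingEnd ℂ (Complex.log A) * w
      = (Complex.log A + starRingEnd ℂ (Complex.log A)) * w := by ring
    _ = Complex.log ((Complex.normSq A : ℝ) : ℂ) * w := by rw [h1, h2]; push_cast; ring_nf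

lemma one_sub_facts {v : ℂ} (hv : ‖v‖ < 1) :
    (1 - v) ≠ 0 ∧ (1 - v).arg ≠ Real.pi := by
  have hre : 0 < (1 - v).re := by
    have := Complex.re_le_norm v
    simp only [Complex.sub_re, Complex.one_re]
    linarith
  constructor
  · intro h
    rw [h] at hre; simp at hre
  · intro h
    rw [Complex.arg_eq_pi_iff] at h
    linarith [h.1]

/-- The symmetric generating function evaluated at `x = (x₁,x₂,0,…)`:
for `z` on the unit circle with `s = (z+z⁻¹)/2 = cos θ` and `|t|` small,
`½(w₁(x) + w₂(x)) = (1 − (x₁+x₂)st + x₁x₂t²)/((1−2stx₁+x₁²t²)(1−2stx₂+x₂²t²))^{κ+1}`. -/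
theorem u1_eval_closed_form (κ x₁ x₂ t s : ℝ) (z : ℂ)
    (hz : ‖z‖ = 1) (hs : (s : ℂ) = (z + z⁻¹) / 2)
    (h1 : |t| * |x₁| < 1) (h2 : |t| * |x₂| < 1) :
    (1 / 2 : ℂ) *
        ((1 - z * t * x₁) ^ (-1 - κ : ℂ) * (1 - z * t * x₂) ^ (-κ : ℂ) *
            (1 - z⁻¹ * t * x₂) ^ (-1 - κ : ℂ) * (1 - z⁻¹ * t * x₁) ^ (-κ : ℂ) +
          (1 - z * t * x₂) ^ (-1 - κ : ℂ) * (1 - z * t * x₁) ^ (-κ : ℂ) *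
            (1 - z⁻¹ * t * x₁) ^ (-1 - κ : ℂ) * (1 - z⁻¹ * t * x₂) ^ (-κ : ℂ)) =
      ((1 - (x₁ + x₂) * s * t + x₁ * x₂ * t ^ 2 : ℝ) : ℂ) /
        (((1 - 2 * s * t * x₁ + x₁ ^ 2 * t ^ 2) * (1 - 2 * s * t * x₂ + x₂ ^ 2 * t ^ 2) : ℝ) : ℂ) ^
          ((κ : ℂ) + 1) := by
  have hz0 : z ≠ 0 := by
    intro h; rw [h] at hz; simp at hz
  have hzinv : z⁻¹ = starRingEnd ℂ z := Complex.inv_eq_conj hz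
  have hz1 : z * z⁻¹ = 1 := mul_inv_cancel₀ hz0
  have hzs : z + z⁻¹ = 2 * (s : ℂ) := by rw [hs]; ring
  -- real part facts for s
  have hsre : s = z.re := by
    have : (s : ℂ) = ((z.re : ℝ) : ℂ) := by
      rw [hs, hzinv, Complex.add_conj]; push_cast; ring
    exact_mod_cast this
  have hs1 : |s| ≤ 1 := by
    rw [hsre]; calc |z.re| ≤ ‖z‖ := Complex.abs_re_le_norm z
      _ = 1 := hz
  -- positivity of the quadratics
  have hP : ∀ x : ℝ, |t| * |x| < 1 → 0 < 1 - 2 * s * t * x + x ^ 2 * t ^ 2 := by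
    intro x hx
    have habs : |t * x| < 1 := by rw [abs_mul]; exact hx
    have hsu : s * (t * x) ≤ |t * x| := by
      calc s * (t * x) ≤ |s * (t * x)| := le_abs_self _
        _ = |s| * |t * x| := abs_mul _ _
        _ ≤ 1 * |t * x| := mul_le_mul_of_nonneg_right hs1 (abs_nonneg _)
        _ = |t * x| := one_mul _
    nlinarith [sq_nonneg (1 - |t * x|), _root_.sq_abs (t * x)]
  have hP₁ := hP x₁ h1
  have hP₂ := hP x₂ h2
  -- abbreviations
  set A : ℂ := 1 - z * t * x₁ with hA
  set B : ℂ := 1 - z * t * x₂ with hB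
  set C : ℂ := 1 - z⁻¹ * t * x₁ with hC
  set D : ℂ := 1 - z⁻¹ * t * x₂ with hD
  have habsz : ∀ x : ℝ, |t| * |x| < 1 → ‖z * t * x‖ < 1 := by
    intro x hx
    rw [norm_mul, norm_mul, hz, one_mul, Complex.norm_real, Complex.norm_real, Real.norm_eq_abs,
      Real.norm_eq_abs]
    exact hx
  have habszi : ∀ x : ℝ, |t| * |x| < 1 → ‖z⁻¹ * t * x‖ < 1 := by
    intro x hx
    rw [norm_mul, norm_mul, norm_inv, hz, inv_one, one_mul, Complex.norm_real,
      Complex.norm_real, Real.norm_eq_abs, Real.norm_eq_abs]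
    exact hx
  obtain ⟨hA0, hAπ⟩ := one_sub_facts (habsz x₁ h1)
  obtain ⟨hB0, hBπ⟩ := one_sub_facts (habsz x₂ h2)
  obtain ⟨hC0, _⟩ := one_sub_facts (habszi x₁ h1)
  obtain ⟨hD0, _⟩ := one_sub_facts (habszi x₂ h2)
  have hCconj : C = starRingEnd ℂ A := by
    rw [hA, hC, map_sub, map_one, map_mul, map_mul, Complex.conj_ofReal,
      Complex.conj_ofReal, hzinv]
  have hDconj : D = starRingEnd ℂ B := by
    rw [hB, hD, map_sub, map_one, map_mul, map_mul, Complex.conj_ofReal,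
      Complex.conj_ofReal, hzinv]
  -- products A*C, B*D are the real quadratics
  have hAC : A * C = ((1 - 2 * s * t * x₁ + x₁ ^ 2 * t ^ 2 : ℝ) : ℂ) := by
    rw [hA, hC]; push_cast
    linear_combination (-(t : ℂ) * x₁) * hzs + ((t : ℂ) ^ 2 * (x₁ : ℂ) ^ 2) * hz1
  have hBD : B * D = ((1 - 2 * s * t * x₂ + x₂ ^ 2 * t ^ 2 : ℝ) : ℂ) := by
    rw [hB, hD]; push_cast
    linear_combination (-(t : ℂ) * x₂) * hzs + ((t : ℂ) ^ 2 * (x₂ : ℂ) ^ 2) * hz1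
  -- the key cpow product identities
  have e1 : A ^ (-κ : ℂ) * C ^ (-κ : ℂ)
      = ((1 - 2 * s * t * x₁ + x₁ ^ 2 * t ^ 2 : ℝ) : ℂ) ^ (-κ : ℂ) := by
    rw [hCconj, cpow_mul_conj hA0 hAπ]
    congr 1
    rw [← Complex.mul_conj, ← hCconj, hAC]
  have e2 : B ^ (-κ : ℂ) * D ^ (-κ : ℂ)
      = ((1 - 2 * s * t * x₂ + x₂ ^ 2 * t ^ 2 : ℝ) : ℂ) ^ (-κ : ℂ) := by
    rw [hDconj, cpow_mul_conj hB0 hBπ]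
    congr 1
    rw [← Complex.mul_conj, ← hDconj, hBD]
  -- decompose exponent -1-κ
  have hexp : (-1 - κ : ℂ) = (-1 : ℂ) + (-κ : ℂ) := by ring
  have decomp : ∀ (w : ℂ), w ≠ 0 → w ^ (-1 - κ : ℂ) = w⁻¹ * w ^ (-κ : ℂ) := by
    intro w hw
    rw [hexp, Complex.cpow_add _ _ hw, Complex.cpow_neg_one]
  rw [decomp A hA0, decomp B hB0, decomp C hC0, decomp D hD0]
  -- gather
  have lhs_eq : (1 / 2 : ℂ) *
      (A⁻¹ * A ^ (-κ : ℂ) * B ^ (-κ : ℂ) * (D⁻¹ * D ^ (-κ : ℂ)) * C ^ (-κ : ℂ) +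
        B⁻¹ * B ^ (-κ : ℂ) * A ^ (-κ : ℂ) * (C⁻¹ * C ^ (-κ : ℂ)) * D ^ (-κ : ℂ)) =
      (1 / 2 : ℂ) * (A⁻¹ * D⁻¹ + B⁻¹ * C⁻¹) *
        ((A ^ (-κ : ℂ) * C ^ (-κ : ℂ)) * (B ^ (-κ : ℂ) * D ^ (-κ : ℂ))) := by ring
  rw [lhs_eq, e1, e2]
  -- RHS denominator manipulation
  set P₁ : ℝ := 1 - 2 * s * t * x₁ + x₁ ^ 2 * t ^ 2 with hP1def
  set P₂ : ℝ := 1 - 2 * s * t * x₂ + x₂ ^ 2 * t ^ 2 with hP2def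
  have hP1c0 : ((P₁ : ℝ) : ℂ) ≠ 0 := by exact_mod_cast hP₁.ne'
  have hP2c0 : ((P₂ : ℝ) : ℂ) ≠ 0 := by exact_mod_cast hP₂.ne'
  have hQ0 : ((P₁ * P₂ : ℝ) : ℂ) ≠ 0 := by
    exact_mod_cast (mul_pos hP₁ hP₂).ne'
  have hQsplit : ((P₁ * P₂ : ℝ) : ℂ) ^ ((κ : ℂ) + 1)
      = ((P₁ : ℝ) : ℂ) ^ (κ : ℂ) * ((P₂ : ℝ) : ℂ) ^ (κ : ℂ) * (((P₁ : ℝ) : ℂ) * ((P₂ : ℝ) : ℂ)) := by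
    rw [Complex.cpow_add _ _ hQ0, Complex.cpow_one, Complex.ofReal_mul,
      Complex.mul_cpow_ofReal_nonneg hP₁.le hP₂.le]
  rw [hQsplit]
  -- turn negative powers into inverses
  rw [show (-κ : ℂ) = -(κ : ℂ) by ring, Complex.cpow_neg, Complex.cpow_neg]
  have hk1 : ((P₁ : ℝ) : ℂ) ^ (κ : ℂ) ≠ 0 := by
    rw [Ne, Complex.cpow_eq_zero_iff]; tauto
  have hk2 : ((P₂ : ℝ) : ℂ) ^ (κ : ℂ) ≠ 0 := by
    rw [Ne, Complex.cpow_eq_zero_iff]; tauto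
  -- numerator identity: A*D + B*C = 2 * N
  have hnum : A * D + B * C = 2 * ((1 - (x₁ + x₂) * s * t + x₁ * x₂ * t ^ 2 : ℝ) : ℂ) := by
    rw [hA, hB, hC, hD]; push_cast
    linear_combination (-(t : ℂ) * x₁ - (t : ℂ) * x₂) * hzs + (2 * (t : ℂ) ^ 2 * x₁ * x₂) * hz1
  have hABCD : A * B * C * D = ((P₁ : ℝ) : ℂ) * ((P₂ : ℝ) : ℂ) := by
    calc A * B * C * D = (A * C) * (B * D) := by ring
      _ = _ := by rw [hAC, hBD]
  have hA0' : A ≠ 0 := by rw [hA]; exact hA0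
  have hB0' : B ≠ 0 := by rw [hB]; exact hB0
  have hC0' : C ≠ 0 := by rw [hC]; exact hC0
  have hD0' : D ≠ 0 := by rw [hD]; exact hD0
  have hsum : A⁻¹ * D⁻¹ + B⁻¹ * C⁻¹
      = 2 * ((1 - (x₁ + x₂) * s * t + x₁ * x₂ * t ^ 2 : ℝ) : ℂ)
        / (((P₁ : ℝ) : ℂ) * ((P₂ : ℝ) : ℂ)) := by
    have hstep : A⁻¹ * D⁻¹ + B⁻¹ * C⁻¹ = (A * D + B * C) / (A * B * C * D) := by
      field_simp
      ring
    rw [hstep, hnum, hABCD]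
  rw [hsum]
  field_simp
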